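/- Let K be a field, σ an automorphism of K with fixed field F, f(t) ∈ F[t] ⊂ K[t;σ] monic of degree m ≥ 2 and not right invariant, and let L = Nuc(S_f). Then L[t;σ|_L]/L[t;σ|_L]f is a subalgebra of Nuc_r(S_f); in particular L ⊕ Lt ⊕ ⋯ ⊕ Lt^{m−1} ⊆ Nuc_r(S_f). -/

import Mathlib

open Polynomial

/-- Skew (twisted) multiplication on polynomials over `K`, representing the
multiplication of the twisted polynomial ring `K[t;σ]` with `t·a = σ(a)·t`:
`(a t^i)·(b t^j) = a σ^i(b) t^{i+j}`. -/
noncomputable def sMul {K : Type} [Field K] (σ : K ≃+* K) (p q : K[X]) : K[X] :=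
  p.sum fun i a => C a * (q.map ((σ ^ i : K ≃+* K) : K →+* K)) * X ^ i

/-- `f` is right invariant in `K[t;σ]`: `f·g ∈ R·f` for all `g`. -/
def RightInvariant {K : Type} [Field K] (σ : K ≃+* K) (f : K[X]) : Prop :=
  ∀ g : K[X], ∃ q : K[X], sMul σ f g = sMul σ q f

/-- Membership in the eigenring of `f`, i.e. the right nucleus of the Petit
algebra `S_f = K[t;σ]/K[t;σ]f` (for `f` not right invariant):
`{g | deg g < deg f ∧ f·g ∈ R·f}`. -/
def InEigenring {K : Type} [Field K] (σ : K ≃+* K) (f g : K[X]) : Prop :=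
  g.degree < f.degree ∧ ∃ q : K[X], sMul σ f g = sMul σ q f

/-- Remainder of right division by `f` in `K[t;σ]` (Petit multiplication in
`S_f` is `g ∘ h = (g·h) mod_r f`). -/
noncomputable def modRight {K : Type} [Field K] (σ : K ≃+* K) (f g : K[X]) : K[X] := by
  classical
  exact if h : ∃ r : K[X], r.degree < f.degree ∧ ∃ q : K[X], g = sMul σ q f + r
    then h.choose else 0

section Thm36Aux

variable {K : Type} [Field K] (σ : K ≃+* K)

lemma pow_fix {x : K} (hx : σ x = x) : ∀ i, (σ ^ i) x = x := by
  intro i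
  induction i with
  | zero => rfl
  | succ n ih =>
      rw [pow_succ]
      show (σ ^ n) (σ x) = x
      rw [hx]; exact ih

lemma coeff_sMul (p q : K[X]) (n : ℕ) :
    (sMul σ p q).coeff n
      = ∑ i ∈ Finset.range (n + 1), p.coeff i * (σ ^ i) (q.coeff (n - i)) := by
  rw [sMul, Polynomial.sum_def, finset_sum_coeff]
  have h1 : ∀ i, (C (p.coeff i) * q.map ((σ ^ i : K ≃+* K) : K →+* K) * X ^ i).coeff n
      = if i ≤ n then p.coeff i * (σ ^ i) (q.coeff (n - i)) else 0 := by
    intro i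
    rw [coeff_mul_X_pow']
    split_ifs with h
    · rw [coeff_C_mul, coeff_map]; rfl
    · rfl
  rw [Finset.sum_congr rfl fun i _ => h1 i, ← Finset.sum_filter]
  apply Finset.sum_subset
  · intro i hi
    rw [Finset.mem_filter] at hi
    exact Finset.mem_range.mpr (Nat.lt_succ_of_le hi.2)
  · intro i hi hni
    have hz : p.coeff i = 0 := by
      by_contra hc
      exact hni (Finset.mem_filter.mpr ⟨mem_support_iff.mpr hc,
        Nat.lt_succ_iff.mp (Finset.mem_range.mp hi)⟩)
    rw [hz, zero_mul]

lemma sMul_zero_left (r : K[X]) : sMul σ 0 r = 0 := by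
  rw [sMul]; exact Polynomial.sum_zero_index _

lemma sMul_C_left (b : K) (p : K[X]) : sMul σ (C b) p = C b * p := by
  rw [sMul, Polynomial.sum_C_index]
  · rw [pow_zero]
    have h : ((1 : K ≃+* K) : K →+* K) = RingHom.id K := rfl
    rw [h, Polynomial.map_id, pow_zero, mul_one]
  · simp

lemma sMul_monomial_left (c : K) (k : ℕ) (p : K[X]) :
    sMul σ (C c * X ^ k) p = C c * p.map ((σ ^ k : K ≃+* K) : K →+* K) * X ^ k := by
  rw [C_mul_X_pow_eq_monomial, sMul, Polynomial.sum_monomial_index]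
  simp

lemma sMul_add_left (p q r : K[X]) : sMul σ (p + q) r = sMul σ p r + sMul σ q r := by
  rw [sMul, sMul, sMul, Polynomial.sum_add_index]
  · intro i; simp
  · intro i b c; rw [C_add, add_mul, add_mul]

lemma sMul_neg_left (p r : K[X]) : sMul σ (-p) r = - sMul σ p r := by
  have h := sMul_add_left σ p (-p) r
  rw [add_neg_cancel, sMul_zero_left] at h
  exact (neg_eq_of_add_eq_zero_right h.symm).symm

lemma sMul_sub_left (p q r : K[X]) : sMul σ (p - q) r = sMul σ p r - sMul σ q r := by
  rw [sub_eq_add_neg, sub_eq_add_neg, sMul_add_left, sMul_neg_left]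

lemma sMul_C_right (p : K[X]) (c : K) (n : ℕ) :
    (sMul σ p (C c)).coeff n = p.coeff n * (σ ^ n) c := by
  rw [coeff_sMul, Finset.sum_eq_single n]
  · rw [Nat.sub_self, coeff_C_zero]
  · intro i hi hne
    have h1 : n - i ≠ 0 := by
      have := Finset.mem_range.mp hi; omega
    rw [coeff_C, if_neg h1, map_zero, mul_zero]
  · intro h; exact absurd (Finset.self_mem_range_succ n) h

variable (f : K[X]) (m : ℕ)

lemma coeff_sMul_f_top (hfm : f.coeff m = 1) (hhigh : ∀ j, m < j → f.coeff j = 0)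
    (q : K[X]) : (sMul σ q f).coeff (q.natDegree + m) = q.leadingCoeff := by
  rw [coeff_sMul, Finset.sum_eq_single q.natDegree]
  · rw [Nat.add_sub_cancel_left, hfm, map_one, mul_one]; rfl
  · intro i hi hne
    rcases lt_or_gt_of_ne hne with h | h
    · rw [hhigh _ (by omega), map_zero, mul_zero]
    · rw [coeff_eq_zero_of_natDegree_lt h, zero_mul]
  · intro h; exact absurd (Finset.mem_range.mpr (by omega)) h

/-- The set `L = K ∩ Nuc(S_f)`, described coefficientwise. -/
def lmem (c : K) : Prop :=
  ∀ j, f.coeff j * (σ ^ j) c = f.coeff j * (σ ^ m) c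

lemma lmem_zero : lmem σ f m 0 := fun j => by simp

lemma lmem_add {c d : K} (hc : lmem σ f m c) (hd : lmem σ f m d) :
    lmem σ f m (c + d) := fun j => by
  rw [map_add, map_add, mul_add, mul_add, hc j, hd j]

lemma lmem_neg {c : K} (hc : lmem σ f m c) : lmem σ f m (-c) := fun j => by
  rw [map_neg, map_neg, mul_neg, mul_neg, hc j]

lemma lmem_sub {c d : K} (hc : lmem σ f m c) (hd : lmem σ f m d) :
    lmem σ f m (c - d) := by
  rw [sub_eq_add_neg]; exact lmem_add σ f m hc (lmem_neg σ f m hd)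

lemma lmem_mul {c d : K} (hc : lmem σ f m c) (hd : lmem σ f m d) :
    lmem σ f m (c * d) := fun j => by
  by_cases h : f.coeff j = 0
  · simp [h]
  · have h1 := mul_left_cancel₀ h (hc j)
    have h2 := mul_left_cancel₀ h (hd j)
    rw [map_mul, map_mul, h1, h2]

lemma lmem_of_fix {c : K} (h : σ c = c) : lmem σ f m c := fun j => by
  rw [pow_fix σ h, pow_fix σ h]

lemma lmem_sigma {c : K} (hc : lmem σ f m c) : lmem σ f m (σ c) := by
  have e1 : ∀ i, (σ ^ i) (σ c) = σ ((σ ^ i) c) := by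
    intro i
    have h1 : (σ ^ i) (σ c) = (σ ^ (i + 1)) c := by rw [pow_succ]; rfl
    rw [h1, pow_succ']; rfl
  intro j
  by_cases h : f.coeff j = 0
  · simp [h]
  · have h1 := mul_left_cancel₀ h (hc j)
    rw [e1, e1, h1]

lemma lmem_pow {c : K} (hc : lmem σ f m c) : ∀ j, lmem σ f m ((σ ^ j) c) := by
  intro j
  induction j with
  | zero => simpa using hc
  | succ n ih =>
      have h1 : (σ ^ (n + 1)) c = σ ((σ ^ n) c) := by rw [pow_succ']; rfl
      rw [h1]; exact lmem_sigma σ f m ih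

lemma lmem_sum {ι : Type*} {s : Finset ι} {g : ι → K}
    (h : ∀ i ∈ s, lmem σ f m (g i)) : lmem σ f m (∑ i ∈ s, g i) :=
  Finset.sum_induction g _ (fun _ _ => lmem_add σ f m) (lmem_zero σ f m) h

lemma sMul_f_eq (hfix : ∀ j, σ (f.coeff j) = f.coeff j)
    {g : K[X]} (hg : ∀ i, lmem σ f m (g.coeff i)) :
    sMul σ f g = sMul σ (g.map ((σ ^ m : K ≃+* K) : K →+* K)) f := by
  ext n
  rw [coeff_sMul, coeff_sMul]
  rw [Finset.sum_congr rfl fun i _ => hg (n - i) i]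
  have hR : ∀ i ∈ Finset.range (n + 1),
      (g.map ((σ ^ m : K ≃+* K) : K →+* K)).coeff i * (σ ^ i) (f.coeff (n - i))
        = f.coeff (n - i) * (σ ^ m) (g.coeff i) := by
    intro i _
    rw [coeff_map, pow_fix σ (hfix _), mul_comm]; rfl
  rw [Finset.sum_congr rfl hR]
  have hrefl := Finset.sum_range_reflect
    (fun j => f.coeff j * (σ ^ m) (g.coeff (n - j))) (n + 1)
  rw [← hrefl]
  apply Finset.sum_congr rfl
  intro j hj
  have hjn : j ≤ n := Nat.lt_succ_iff.mp (Finset.mem_range.mp hj)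
  have e1 : n + 1 - 1 - j = n - j := by omega
  rw [e1, Nat.sub_sub_self hjn]

lemma eigen_of_lmem (hfix : ∀ j, σ (f.coeff j) = f.coeff j)
    {g : K[X]} (hdg : g.degree < f.degree)
    (hg : ∀ i, lmem σ f m (g.coeff i)) : InEigenring σ f g :=
  ⟨hdg, _, sMul_f_eq σ f m hfix hg⟩

lemma eigenC_of_lmem (h0 : (0 : WithBot ℕ) < f.degree)
    (hfix : ∀ j, σ (f.coeff j) = f.coeff j)
    {c : K} (hc : lmem σ f m c) : InEigenring σ f (C c) := by
  apply eigen_of_lmem σ f m hfix (lt_of_le_of_lt degree_C_le h0)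
  intro i
  rw [coeff_C]
  split_ifs with h
  · exact hc
  · exact lmem_zero σ f m

lemma lmem_of_eigenC (hfm : f.coeff m = 1) (hhigh : ∀ j, m < j → f.coeff j = 0)
    {c : K} (h : InEigenring σ f (C c)) : lmem σ f m c := by
  obtain ⟨-, q, he⟩ := h
  by_cases hq : q = 0
  · rw [hq, sMul_zero_left] at he
    have h0 : c = 0 := by
      have h1 := congrArg (fun p => p.coeff m) he
      simp only [coeff_zero] at h1
      rw [sMul_C_right, hfm, one_mul] at h1
      have h2 := congrArg (σ ^ m).symm h1
      rwa [RingEquiv.symm_apply_apply, map_zero] at h2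
    rw [h0]; exact lmem_zero σ f m
  · by_cases hd : q.natDegree = 0
    · have hqC : q = C (q.coeff 0) := eq_C_of_natDegree_eq_zero hd
      intro j
      have h2 := congrArg (fun p => p.coeff j) he
      rw [sMul_C_right, hqC, sMul_C_left, coeff_C_mul] at h2
      have h3 := congrArg (fun p => p.coeff m) he
      rw [sMul_C_right, hfm, one_mul, hqC, sMul_C_left, coeff_C_mul, hfm, mul_one] at h3
      rw [h2, ← h3, mul_comm]
    · exfalso
      have h1 := congrArg (fun p => p.coeff (q.natDegree + m)) he
      rw [sMul_C_right, coeff_sMul_f_top σ f m hfm hhigh q] at h1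
      rw [hhigh (q.natDegree + m) (by omega), zero_mul] at h1
      exact hq (leadingCoeff_eq_zero.mp h1.symm)

lemma mod_uniq (hdeg : f.degree = (m : ℕ)) (hfm : f.coeff m = 1)
    (hhigh : ∀ j, m < j → f.coeff j = 0)
    {q₁ q₂ r₁ r₂ : K[X]} (h₁ : r₁.degree < f.degree) (h₂ : r₂.degree < f.degree)
    (he : sMul σ q₁ f + r₁ = sMul σ q₂ f + r₂) : r₁ = r₂ := by
  have hd : sMul σ (q₁ - q₂) f = r₂ - r₁ := by
    rw [sMul_sub_left, sub_eq_sub_iff_add_eq_add]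
    exact he.trans (add_comm _ _)
  by_cases hq : q₁ - q₂ = 0
  · rw [hq, sMul_zero_left] at hd
    exact (sub_eq_zero.mp hd.symm).symm
  · exfalso
    have h1 := coeff_sMul_f_top σ f m hfm hhigh (q₁ - q₂)
    rw [hd] at h1
    have hr : (r₂ - r₁).degree < ((q₁ - q₂).natDegree + m : ℕ) := by
      have hrm : (r₂ - r₁).degree < (m : WithBot ℕ) := by
        rw [hdeg] at h₁ h₂
        exact lt_of_le_of_lt (degree_sub_le _ _) (max_lt h₂ h₁)
      exact lt_of_lt_of_le hrm (by exact_mod_cast Nat.le_add_left m _)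
    rw [coeff_eq_zero_of_degree_lt hr] at h1
    exact hq (leadingCoeff_eq_zero.mp h1.symm)

lemma div_ex (hm : 2 ≤ m) (hdeg : f.degree = (m : ℕ)) (hfm : f.coeff m = 1)
    (hhigh : ∀ j, m < j → f.coeff j = 0)
    (hfix : ∀ j, σ (f.coeff j) = f.coeff j) :
    ∀ n (p : K[X]), p.natDegree ≤ n → (∀ i, lmem σ f m (p.coeff i)) →
      ∃ q r : K[X], (∀ i, lmem σ f m (r.coeff i)) ∧ r.degree < f.degree ∧
        p = sMul σ q f + r := by
  intro n
  induction n using Nat.strong_induction_on with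
  | _ n ih =>
    intro p hpn hpl
    by_cases hlt : p.degree < f.degree
    · exact ⟨0, p, hpl, hlt, by rw [sMul_zero_left, zero_add]⟩
    · push_neg at hlt
      have hp0 : p ≠ 0 := by
        intro h
        rw [h, degree_zero, le_bot_iff, hdeg] at hlt
        exact (WithBot.coe_ne_bot hlt)
      have hmd : m ≤ p.natDegree := by
        have h1 := natDegree_le_natDegree hlt
        rwa [natDegree_eq_of_degree_eq_some hdeg] at h1
      set d := p.natDegree with hdd
      set c := p.coeff d with hc
      set k := d - m with hk
      set s : K[X] := C c * f.map ((σ ^ k : K ≃+* K) : K →+* K) * X ^ k with hs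
      have hscoeff : ∀ j, s.coeff j
          = if k ≤ j then c * (σ ^ k) (f.coeff (j - k)) else 0 := by
        intro j
        rw [hs, coeff_mul_X_pow']
        split_ifs with h
        · rw [coeff_C_mul, coeff_map]; rfl
        · rfl
      set p' := p - s with hp'
      have hp'c : ∀ j, d ≤ j → p'.coeff j = 0 := by
        intro j hj
        rcases eq_or_lt_of_le hj with h | h
        · rw [hp', coeff_sub, hscoeff, if_pos (by omega), ← h]
          have e1 : d - k = m := by omega
          rw [e1, hfm, map_one, mul_one, sub_self]
        · rw [hp', coeff_sub, coeff_eq_zero_of_natDegree_lt h, hscoeff]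
          split_ifs with h2
          · rw [hhigh (j - k) (by omega), map_zero, mul_zero, sub_zero]
          · rw [sub_zero]
      have hdp' : p'.degree < (d : WithBot ℕ) := by
        refine (degree_lt_iff_coeff_zero p' d).mpr ?_
        intro j hj
        exact hp'c j (by exact_mod_cast hj)
      have hsl : ∀ i, lmem σ f m (s.coeff i) := by
        intro i
        rw [hscoeff]
        split_ifs with h
        · refine lmem_mul σ f m (hpl d) ?_
          rw [pow_fix σ (hfix _)]
          exact lmem_of_fix σ f m (hfix _)
        · exact lmem_zero σ f m
      have hp'l : ∀ i, lmem σ f m (p'.coeff i) := by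
        intro i
        rw [hp', coeff_sub]
        exact lmem_sub σ f m (hpl i) (hsl i)
      have hps : p = sMul σ (C c * X ^ k) f + p' := by
        rw [sMul_monomial_left, hp', hs]; ring
      by_cases hz : p' = 0
      · refine ⟨C c * X ^ k, 0, ?_, ?_, ?_⟩
        · intro i; rw [coeff_zero]; exact lmem_zero σ f m
        · rw [degree_zero, hdeg]; exact WithBot.bot_lt_coe m
        · rw [hps, hz]
      · have hlt2 : p'.natDegree < d := (natDegree_lt_iff_degree_lt hz).mpr hdp'
        obtain ⟨q', r', hr'l, hr'd, he'⟩ :=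
          ih p'.natDegree (by omega) p' le_rfl hp'l
        refine ⟨C c * X ^ k + q', r', hr'l, hr'd, ?_⟩
        rw [sMul_add_left, hps, he', add_assoc]

end Thm36Aux

/-- Theorem 3.6: let `f(t) = t^m - Σ a_i t^i ∈ F[t] ⊂ K[t;σ]` be monic of degree
`m ≥ 2` and not right invariant, and let `L = Nuc(S_f)`. Then
`L[t;σ|_L]/L[t;σ|_L]f` is a subalgebra of `Nuc_r(S_f)`: every polynomial of degree
`< m` with coefficients in `L` lies in `Nuc_r(S_f)` (so
`L ⊕ Lt ⊕ ⋯ ⊕ Lt^{m-1} ⊆ Nuc_r(S_f)`), and this set is closed under the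
multiplication of `S_f`. -/
theorem nucleusPoly_subalgebra_rightNucleus {K : Type} [Field K] (σ : K ≃+* K)
    (m : ℕ) (hm : 2 ≤ m) (a : ℕ → K) (f : K[X])
    (hf : f = X ^ m - ∑ i ∈ Finset.range m, C (a i) * X ^ i)
    (hF : ∀ i, σ (a i) = a i)
    (hri : ¬ RightInvariant σ f) :
    (∀ g : K[X], g.degree < f.degree →
        (∀ i, InEigenring σ f (C (g.coeff i))) → InEigenring σ f g) ∧
      ∀ g h : K[X], g.degree < f.degree → h.degree < f.degree →
        (∀ i, InEigenring σ f (C (g.coeff i))) →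
        (∀ i, InEigenring σ f (C (h.coeff i))) →
        (modRight σ f (sMul σ g h)).degree < f.degree ∧
          ∀ i, InEigenring σ f (C ((modRight σ f (sMul σ g h)).coeff i)) := by
  classical
  have hsum : ∀ j, (∑ i ∈ Finset.range m, C (a i) * X ^ i).coeff j
      = if j < m then a j else 0 := by
    intro j
    rw [finset_sum_coeff]
    simp only [coeff_C_mul, coeff_X_pow, mul_ite, mul_one, mul_zero]
    rw [Finset.sum_ite_eq (Finset.range m) j (fun i => a i)]
    simp [Finset.mem_range]
  have hcoeff : ∀ j, f.coeff j
      = (if j = m then 1 else 0) - (if j < m then a j else 0) := by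
    intro j
    rw [hf, coeff_sub, coeff_X_pow, hsum]
  have hfm : f.coeff m = 1 := by
    rw [hcoeff, if_pos rfl, if_neg (lt_irrefl m), sub_zero]
  have hhigh : ∀ j, m < j → f.coeff j = 0 := by
    intro j hj
    rw [hcoeff, if_neg (by omega), if_neg (by omega), sub_zero]
  have hfix : ∀ j, σ (f.coeff j) = f.coeff j := by
    intro j
    rw [hcoeff, map_sub]
    congr 1 <;> split_ifs <;> simp [hF]
  have hdeg : f.degree = (m : ℕ) := by
    rw [hf]
    have h2 : (∑ i ∈ Finset.range m, C (a i) * X ^ i).degree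
        < (X ^ m : K[X]).degree := by
      rw [degree_X_pow]
      apply lt_of_le_of_lt (degree_sum_le _ _)
      rw [Finset.sup_lt_iff (by exact_mod_cast WithBot.bot_lt_coe m)]
      intro i hi
      exact lt_of_le_of_lt (degree_C_mul_X_pow_le _ _)
        (by exact_mod_cast Finset.mem_range.mp hi)
    rw [degree_sub_eq_left_of_degree_lt h2, degree_X_pow]
  have h0deg : (0 : WithBot ℕ) < f.degree := by
    rw [hdeg]
    exact_mod_cast (by omega : 0 < m)
  constructor
  · intro g hdg hgc
    exact eigen_of_lmem σ f m hfix hdg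
      (fun i => lmem_of_eigenC σ f m hfm hhigh (hgc i))
  · intro g h hdg hdh hgc hhc
    have hgl : ∀ i, lmem σ f m (g.coeff i) :=
      fun i => lmem_of_eigenC σ f m hfm hhigh (hgc i)
    have hhl : ∀ i, lmem σ f m (h.coeff i) :=
      fun i => lmem_of_eigenC σ f m hfm hhigh (hhc i)
    have hpl : ∀ i, lmem σ f m ((sMul σ g h).coeff i) := by
      intro i
      rw [coeff_sMul]
      apply lmem_sum
      intro j _
      exact lmem_mul σ f m (hgl j) (lmem_pow σ f m (hhl (i - j)) j)
    obtain ⟨q, r, hrl, hrd, hre⟩ := div_ex σ f m hm hdeg hfm hhigh hfix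
      (sMul σ g h).natDegree (sMul σ g h) le_rfl hpl
    have hEx : ∃ r' : K[X], r'.degree < f.degree ∧
        ∃ q', sMul σ g h = sMul σ q' f + r' := ⟨r, hrd, q, hre⟩
    have hmr : modRight σ f (sMul σ g h) = r := by
      rw [modRight, dif_pos hEx]
      obtain ⟨hd2, q2, he2⟩ := hEx.choose_spec
      exact mod_uniq σ f m hdeg hfm hhigh hd2 hrd (he2.symm.trans hre)
    rw [hmr]
    exact ⟨hrd, fun i => eigenC_of_lmem σ f m h0deg hfix (hrl i)⟩
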